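/- Let M₋ < Ψ(1/2) < M₊ and define Ψ(t) = M₋ for t < 1/2, Ψ(1/2) at t = 1/2, and M₊ for t > 1/2. Let S₁ be the Smith set (every element of S₁ beats every element outside S₁). Then for any Nash equilibrium (π₁*, π₂*), the support of π₁* is contained in S₁. -/
import Mathlib


open Finset

/-- A probability vector on `Fin n`. -/
def IsProb {n : ℕ} (π : Fin n → ℝ) : Prop := (∀ i, 0 ≤ π i) ∧ ∑ i, π i = 1

/-- Expected payoff of the two-player game with payoff matrix `A`. -/
def payoff {n : ℕ} (A : Fin n → Fin n → ℝ) (π π' : Fin n → ℝ) : ℝ :=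
  ∑ i, ∑ j, π i * π' j * A i j

/-- Nash equilibrium of the zero-sum game with payoff matrix `A`. -/
def IsNash {n : ℕ} (A : Fin n → Fin n → ℝ) (π₁ π₂ : Fin n → ℝ) : Prop :=
  IsProb π₁ ∧ IsProb π₂ ∧
  (∀ π, IsProb π → payoff A π π₂ ≤ payoff A π₁ π₂) ∧
  (∀ π', IsProb π' → payoff A π₁ π₂ ≤ payoff A π₁ π')


theorem stmt_9 {n : ℕ} (P : Fin n → Fin n → ℝ) (Mlo Mhi c : ℝ)
    (hM : Mlo < c) (hM' : c < Mhi)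
    (hP01 : ∀ i j, 0 ≤ P i j ∧ P i j ≤ 1)
    (hPanti : ∀ i j, P i j + P j i = 1)
    (hNoTie : ∀ i j, i ≠ j → P i j ≠ 1 / 2)
    (S₁ : Finset (Fin n)) (hS₁ne : S₁.Nonempty)
    (hSmith : ∀ i ∈ S₁, ∀ j ∉ S₁, 1 / 2 < P i j)
    (π₁ π₂ : Fin n → ℝ)
    (hNash : IsNash
      (fun i j => if P i j < 1 / 2 then Mlo else if P i j = 1 / 2 then c else Mhi) π₁ π₂) :
    ∀ i, 0 < π₁ i → i ∈ S₁ := by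
  intro k hk
  by_contra hkS
  obtain ⟨i₀, hi₀⟩ := hS₁ne
  set A : Fin n → Fin n → ℝ :=
    fun i j => if P i j < 1 / 2 then Mlo else if P i j = 1 / 2 then c else Mhi with hA
  obtain ⟨⟨h1pos, h1sum⟩, ⟨h2pos, h2sum⟩, hbr1, hbr2⟩ := hNash
  have hAle : ∀ i j, A i j ≤ Mhi := by
    intro i j; simp only [hA]; split_ifs <;> linarith
  have hAge : ∀ i j, Mlo ≤ A i j := by
    intro i j; simp only [hA]; split_ifs <;> linarith
  have hdiag : ∀ i, P i i = 1 / 2 := by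
    intro i; have := hPanti i i; linarith
  have hAdiag : ∀ i, A i i = c := by
    intro i; simp only [hA, hdiag i]; norm_num
  have hAhi : ∀ i ∈ S₁, ∀ j ∉ S₁, A i j = Mhi := by
    intro i hi j hj
    have h := hSmith i hi j hj
    simp only [hA]
    rw [if_neg (by linarith), if_neg (by linarith)]
  have hAlo : ∀ i ∉ S₁, ∀ j ∈ S₁, A i j = Mlo := by
    intro i hi j hj
    have h := hSmith j hj i hi
    have h2 := hPanti i j
    simp only [hA]
    rw [if_pos (by linarith)]
  -- pointwise domination of k by any i ∈ S₁
  have hdom : ∀ i ∈ S₁, ∀ j, A k j ≤ A i j := by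
    intro i hi j
    by_cases hj : j ∈ S₁
    · rw [hAlo k hkS j hj]; exact hAge i j
    · rw [hAhi i hi j hj]; exact hAle k j
  -- delta strategies
  have hδprob : ∀ i : Fin n, IsProb (fun j => if j = i then (1 : ℝ) else 0) := by
    intro i
    refine ⟨fun j => ?_, by simp⟩
    dsimp only
    split <;> norm_num
  set g : Fin n → ℝ := fun i => ∑ j, π₂ j * A i j with hg
  have hpδ : ∀ i, payoff A (fun j => if j = i then (1 : ℝ) else 0) π₂ = g i := by
    intro i
    unfold payoff
    rw [Finset.sum_eq_single_of_mem i (Finset.mem_univ i)]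
    · simp [hg]
    · intro b _ hb; simp [hb]
  set v : ℝ := payoff A π₁ π₂ with hv
  have hvsum : v = ∑ i, π₁ i * g i := by
    simp only [hv, payoff, hg, Finset.mul_sum, mul_assoc]
  have hgle : ∀ i, g i ≤ v := by
    intro i
    rw [← hpδ i]
    exact hbr1 _ (hδprob i)
  -- equalizer on the support of π₁
  have hgk : g k = v := by
    by_contra hne
    have hlt : π₁ k * g k < π₁ k * v := by
      exact mul_lt_mul_of_pos_left (lt_of_le_of_ne (hgle k) hne) hk
    have hsum_le : ∑ i, π₁ i * g i < ∑ i, π₁ i * v := by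
      apply Finset.sum_lt_sum
      · intro i _; exact mul_le_mul_of_nonneg_left (hgle i) (h1pos i)
      · exact ⟨k, Finset.mem_univ k, hlt⟩
    rw [← Finset.sum_mul, h1sum, one_mul, ← hvsum] at hsum_le
    exact lt_irrefl v hsum_le
  -- π₂ vanishes on S₁
  have hπ₂S : ∀ i ∈ S₁, π₂ i = 0 := by
    intro i hi
    have hdiff : ∑ j, π₂ j * (A i j - A k j) = g i - g k := by
      simp only [hg, mul_sub, Finset.sum_sub_distrib]
    have hnonneg : ∀ j ∈ Finset.univ, 0 ≤ π₂ j * (A i j - A k j) := by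
      intro j _
      exact mul_nonneg (h2pos j) (by linarith [hdom i hi j])
    have hle0 : ∑ j, π₂ j * (A i j - A k j) ≤ 0 := by
      rw [hdiff, hgk]; linarith [hgle i]
    have hzero : ∑ j, π₂ j * (A i j - A k j) = 0 :=
      le_antisymm hle0 (Finset.sum_nonneg hnonneg)
    have := (Finset.sum_eq_zero_iff_of_nonneg hnonneg).mp hzero i (Finset.mem_univ i)
    have hAik : A k i = Mlo := hAlo k hkS i hi
    rw [hAdiag i, hAik] at this
    have : π₂ i * (c - Mlo) = 0 := this
    rcases mul_eq_zero.mp this with h | h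
    · exact h
    · exfalso; linarith
  -- then g i₀ = Mhi
  have hgi₀ : g i₀ = Mhi := by
    have : ∀ j ∈ Finset.univ, π₂ j * A i₀ j = π₂ j * Mhi := by
      intro j _
      by_cases hj : j ∈ S₁
      · rw [hπ₂S j hj]; ring
      · rw [hAhi i₀ hi₀ j hj]
    rw [hg]
    calc (∑ j, π₂ j * A i₀ j) = ∑ j, π₂ j * Mhi := Finset.sum_congr rfl this
      _ = (∑ j, π₂ j) * Mhi := by rw [Finset.sum_mul]
      _ = Mhi := by rw [h2sum, one_mul]
  have hMhi_le_v : Mhi ≤ v := hgi₀ ▸ hgle i₀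
  -- player 2 deviation to δ i₀
  have hpδ2 : payoff A π₁ (fun j => if j = i₀ then (1 : ℝ) else 0) = ∑ i, π₁ i * A i i₀ := by
    unfold payoff
    apply Finset.sum_congr rfl
    intro i _
    rw [Finset.sum_eq_single_of_mem i₀ (Finset.mem_univ i₀)]
    · simp
    · intro b _ hb; simp [hb]
  have hv_le : v ≤ ∑ i, π₁ i * A i i₀ := by
    rw [← hpδ2]; exact hbr2 _ (hδprob i₀)
  have hki₀ : A k i₀ = Mlo := hAlo k hkS i₀ hi₀
  have hsplit : ∑ i, π₁ i * A i i₀ < Mhi := by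
    have herase : ∑ i ∈ Finset.univ.erase k, π₁ i * A i i₀ + π₁ k * A k i₀
        = ∑ i, π₁ i * A i i₀ := Finset.sum_erase_add _ _ (Finset.mem_univ k)
    have h1 : ∑ i ∈ Finset.univ.erase k, π₁ i * A i i₀
        ≤ ∑ i ∈ Finset.univ.erase k, π₁ i * Mhi := by
      apply Finset.sum_le_sum
      intro i _
      exact mul_le_mul_of_nonneg_left (hAle i i₀) (h1pos i)
    have h2 : ∑ i ∈ Finset.univ.erase k, π₁ i * Mhi = (1 - π₁ k) * Mhi := by
      rw [← Finset.sum_mul]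
      congr 1
      have := Finset.sum_erase_add Finset.univ π₁ (Finset.mem_univ k)
      rw [h1sum] at this
      linarith
    rw [hki₀] at herase
    nlinarith [hk]
  linarith
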